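/- Let Ω₀ and Ω₁ be compact subsets of ℝⁿ with |∂Ω₀| = 0 (Lebesgue measure), and let c : Ω₀ × Ω₁ → ℝ be C¹. If for each x ∈ Ω₀ the map Ω₁ ∋ y ↦ ∇ₓc(x,y) is injective, then for every c-concave function φ : Ω₀ → ℝ the set { x ∈ Ω₀ : ∂_cφ(x) is not a singleton } has Lebesgue measure zero; i.e., c satisfies condition (SV) with μ equal to Lebesgue measure on Ω₀. -/

import Mathlib

open MeasureTheory

/-- The `c`-transform relative to the domain `Ω₀`:
`u^c(m) = inf_{x ∈ Ω₀} (c(x,m) − u(x))`. -/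
noncomputable def cTransformOn {E : Type*} (Ω₀ : Set E) (c : E → E → ℝ) (u : E → ℝ)
    (m : E) : ℝ :=
  ⨅ x : Ω₀, (c x m - u x)

/-- `φ` is `c`-concave on `Ω₀` (relative to the target `Ω₁`). -/
def CConcaveOn {E : Type*} (Ω₀ Ω₁ : Set E) (c : E → E → ℝ) (φ : E → ℝ) : Prop :=
  ∀ x₀ ∈ Ω₀, ∃ m₀ ∈ Ω₁, ∃ b : ℝ, (∀ x ∈ Ω₀, φ x ≤ c x m₀ - b) ∧ φ x₀ = c x₀ m₀ - b

/-- The `c`-superdifferential `∂_cφ(x) = { m ∈ Ω₁ : φ(x) + φ^c(m) = c(x,m) }`. -/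
noncomputable def cSuperdiffOn {E : Type*} (Ω₀ Ω₁ : Set E) (c : E → E → ℝ) (φ : E → ℝ)
    (x : E) : Set E :=
  {m ∈ Ω₁ | φ x + cTransformOn Ω₀ c φ m = c x m}

/-- Let `Ω₀, Ω₁ ⊆ ℝⁿ` be compact with `|∂Ω₀| = 0` and let `c` be `C¹`.  If for
each `x ∈ Ω₀` the map `y ↦ ∇ₓc(x,y)` is injective on `Ω₁`, then for every `c`-concave `φ`
the set `{ x ∈ Ω₀ : ∂_cφ(x) is not a singleton }` has Lebesgue measure zero, i.e. `c`
satisfies condition (SV) with `μ` the Lebesgue measure. -/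
theorem cost_satisfies_SV {n : ℕ}
    (Ω₀ Ω₁ : Set (EuclideanSpace ℝ (Fin n)))
    (hΩ₀ : IsCompact Ω₀) (hΩ₁ : IsCompact Ω₁)
    (hbd : volume (frontier Ω₀) = 0)
    (c : EuclideanSpace ℝ (Fin n) → EuclideanSpace ℝ (Fin n) → ℝ)
    (hc : ContDiff ℝ 1 (Function.uncurry c))
    (hinj : ∀ x ∈ Ω₀, Set.InjOn (fun y => gradient (fun x' => c x' y) x) Ω₁)
    (φ : EuclideanSpace ℝ (Fin n) → ℝ) (hφ : CConcaveOn Ω₀ Ω₁ c φ) :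
    volume {x ∈ Ω₀ | ¬ ∃ m, cSuperdiffOn Ω₀ Ω₁ c φ x = {m}} = 0 := by
  classical
  rcases Set.eq_empty_or_nonempty Ω₀ with h0 | ⟨z₀, hz₀⟩
  · rw [h0]; simp
  -- notation
  -- derivative of the partial map x ↦ c x m
  have hder : ∀ (m x : EuclideanSpace ℝ (Fin n)), HasFDerivAt (fun x' => c x' m)
      ((fderiv ℝ (Function.uncurry c) (x, m)).comp
        (ContinuousLinearMap.inl ℝ (EuclideanSpace ℝ (Fin n)) (EuclideanSpace ℝ (Fin n)))) x := by
    intro m x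
    exact HasFDerivAt.comp (f := fun e => (e, m)) x ((hc.differentiable one_ne_zero (x, m)).hasFDerivAt) (hasFDerivAt_prodMk_left (𝕜 := ℝ) x m)
  have hnorm : ∀ (p : EuclideanSpace ℝ (Fin n) × EuclideanSpace ℝ (Fin n)),
      ‖(fderiv ℝ (Function.uncurry c) p).comp
        (ContinuousLinearMap.inl ℝ (EuclideanSpace ℝ (Fin n)) (EuclideanSpace ℝ (Fin n)))‖
        ≤ ‖fderiv ℝ (Function.uncurry c) p‖ := by
    intro p
    refine ContinuousLinearMap.opNorm_le_bound _ (norm_nonneg _) fun v => ?_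
    have hv : ‖((v, (0 : EuclideanSpace ℝ (Fin n))) :
        EuclideanSpace ℝ (Fin n) × EuclideanSpace ℝ (Fin n))‖ = ‖v‖ := by
      simp [Prod.norm_def]
    calc ‖fderiv ℝ (Function.uncurry c) p (v, 0)‖
        ≤ ‖fderiv ℝ (Function.uncurry c) p‖ * ‖((v, (0 : EuclideanSpace ℝ (Fin n))) :
            EuclideanSpace ℝ (Fin n) × EuclideanSpace ℝ (Fin n))‖ :=
          ContinuousLinearMap.le_opNorm _ _
      _ = _ := by rw [hv]
  -- a convex compact set containing Ω₀
  obtain ⟨R, hR⟩ := hΩ₀.isBounded.subset_closedBall 0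
  set s : Set (EuclideanSpace ℝ (Fin n)) := Metric.closedBall 0 R with hs
  have hscompact : IsCompact s := isCompact_closedBall 0 R
  have hsconv : Convex ℝ s := convex_closedBall 0 R
  have hΩ₀s : Ω₀ ⊆ s := hR
  -- uniform bound on the derivative over s ×ˢ Ω₁
  have hcont : Continuous fun p : EuclideanSpace ℝ (Fin n) × EuclideanSpace ℝ (Fin n) =>
      ‖fderiv ℝ (Function.uncurry c) p‖ := (hc.continuous_fderiv one_ne_zero).norm
  obtain ⟨C₀, hC₀⟩ := (hscompact.prod hΩ₁).exists_bound_of_continuousOn hcont.continuousOn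
  set C : ℝ := max C₀ 0 with hC
  have hC0 : 0 ≤ C := le_max_right _ _
  have hbound : ∀ m ∈ Ω₁, ∀ x ∈ s, ‖fderiv ℝ (fun x' => c x' m) x‖ ≤ C := by
    intro m hm x hx
    rw [(hder m x).fderiv]
    refine (hnorm (x, m)).trans ?_
    have h := hC₀ (x, m) ⟨hx, hm⟩
    rw [norm_norm] at h
    exact h.trans (le_max_left C₀ 0)
  -- c(·, m) is C-Lipschitz on s
  have hlipc : ∀ m ∈ Ω₁, ∀ x ∈ s, ∀ y ∈ s, ‖c y m - c x m‖ ≤ C * ‖y - x‖ := by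
    intro m hm x hx y hy
    exact hsconv.norm_image_sub_le_of_norm_fderiv_le
      (fun z _ => (hder m z).differentiableAt) (fun z hz => hbound m hm z hz) hx hy
  -- φ is C-Lipschitz on Ω₀
  have hφlip : LipschitzOnWith (Real.toNNReal C) φ Ω₀ := by
    rw [lipschitzOnWith_iff_dist_le_mul]
    intro x hx y hy
    have key : ∀ a ∈ Ω₀, ∀ b ∈ Ω₀, φ a - φ b ≤ C * dist a b := by
      intro a ha b hb
      obtain ⟨m, hm, r, hub, heq⟩ := hφ b hb
      have h1 : φ a ≤ c a m - r := hub a ha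
      have h2 : ‖c a m - c b m‖ ≤ C * ‖a - b‖ := hlipc m hm b (hΩ₀s hb) a (hΩ₀s ha)
      have h3 : c a m - c b m ≤ C * ‖a - b‖ := (le_abs_self _).trans (by rwa [Real.norm_eq_abs] at h2)
      have : dist a b = ‖a - b‖ := dist_eq_norm a b
      rw [this]; linarith
    have h1 := key x hx y hy
    have h2 := key y hy x hx
    rw [Real.dist_eq, abs_sub_le_iff, Real.coe_toNNReal C hC0]
    rw [dist_comm y x] at h2
    exact ⟨h1, h2⟩
  -- extend φ to a globally Lipschitz function g
  obtain ⟨g, hglip, hgeq⟩ := hφlip.extend_real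
  -- Rademacher
  have hdiffae : volume {x : EuclideanSpace ℝ (Fin n) | ¬ DifferentiableAt ℝ g x} = 0 :=
    ae_iff.mp (hglip.ae_differentiableAt (μ := volume))
  -- key pointwise statement
  have hkey : ∀ x ∈ interior Ω₀, DifferentiableAt ℝ g x →
      ∀ m ∈ cSuperdiffOn Ω₀ Ω₁ c φ x,
        fderiv ℝ (fun x' => c x' m) x = fderiv ℝ g x := by
    intro x hx hgd m hm
    obtain ⟨hmΩ, hmeq⟩ := hm
    have hxΩ : x ∈ Ω₀ := interior_subset hx
    set t : ℝ := cTransformOn Ω₀ c φ m with ht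
    -- t ≤ c x' m - φ x' for all x' ∈ Ω₀ (need BddBelow)
    have hcg : ContinuousOn (fun x' => c x' m - g x') Ω₀ :=
      (fun z hz => ((hder m z).differentiableAt.continuousAt.sub
        hglip.continuous.continuousAt).continuousWithinAt)
    obtain ⟨z, hzΩ, hzmin⟩ := hΩ₀.exists_isMinOn ⟨z₀, hz₀⟩ hcg
    have hbdd : BddBelow (Set.range fun x' : Ω₀ => c x' m - φ x') := by
      refine ⟨c z m - g z, ?_⟩
      rintro _ ⟨⟨x', hx'⟩, rfl⟩
      have := hzmin hx'
      simp only [Set.mem_setOf_eq] at this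
      have hgx' : φ x' = g x' := hgeq hx'
      simpa [hgx'] using this
    have hle : ∀ x' ∈ Ω₀, t ≤ c x' m - φ x' := by
      intro x' hx'
      exact ciInf_le hbdd ⟨x', hx'⟩
    -- local minimum argument
    have hmin : IsLocalMin (fun x' => c x' m - t - g x') x := by
      have hx0 : c x m - t - g x = 0 := by
        have := hgeq hxΩ; rw [← this]; linarith [hmeq]
      rw [IsLocalMin, IsMinFilter]
      filter_upwards [isOpen_interior.mem_nhds hx] with y hy
      have hyΩ : y ∈ Ω₀ := interior_subset hy
      have := hle y hyΩ
      have hgy := hgeq hyΩ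
      rw [hx0]; rw [← hgy]; linarith
    have hdm : DifferentiableAt ℝ (fun x' => c x' m - t) x :=
      (hder m x).differentiableAt.sub_const t
    have hzero : fderiv ℝ (fun x' => c x' m - t - g x') x = 0 := hmin.fderiv_eq_zero
    have : fderiv ℝ (fun x' => c x' m - t - g x') x
        = fderiv ℝ (fun x' => c x' m - t) x - fderiv ℝ g x := fderiv_sub hdm hgd
    have h2 : fderiv ℝ (fun x' => c x' m - t) x = fderiv ℝ (fun x' => c x' m) x :=
      fderiv_sub_const t
    rw [h2] at this
    rw [this] at hzero
    exact sub_eq_zero.mp hzero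
  -- the bad set is contained in frontier Ω₀ ∪ non-differentiability set
  have hsub : {x ∈ Ω₀ | ¬ ∃ m, cSuperdiffOn Ω₀ Ω₁ c φ x = {m}}
      ⊆ frontier Ω₀ ∪ {x : EuclideanSpace ℝ (Fin n) | ¬ DifferentiableAt ℝ g x} := by
    rintro x ⟨hxΩ, hxbad⟩
    by_contra hcon
    rw [Set.mem_union] at hcon
    push_neg at hcon
    obtain ⟨hnf, hnd⟩ := hcon
    have hgd : DifferentiableAt ℝ g x := not_not.mp hnd
    have hxint : x ∈ interior Ω₀ := by
      have hcl : closure Ω₀ = Ω₀ := hΩ₀.isClosed.closure_eq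
      rcases (em (x ∈ interior Ω₀)) with h | h
      · exact h
      · exact absurd ⟨by rw [hcl]; exact hxΩ, h⟩ hnf
    -- existence of an element of the superdifferential
    obtain ⟨m₀, hm₀Ω, b, hub, heqx⟩ := hφ x hxΩ
    have htm₀ : cTransformOn Ω₀ c φ m₀ = b := by
      refine le_antisymm ?_ ?_
      · have hbdd : BddBelow (Set.range fun x' : Ω₀ => c x' m₀ - φ x') := by
          refine ⟨b, ?_⟩
          rintro _ ⟨⟨x', hx'⟩, rfl⟩
          have := hub x' hx'
          simp only; linarith
        have := ciInf_le hbdd (⟨x, hxΩ⟩ : Ω₀)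
        simp only at this
        calc cTransformOn Ω₀ c φ m₀ ≤ c x m₀ - φ x := this
          _ = b := by linarith [heqx]
      · have : Nonempty Ω₀ := ⟨⟨x, hxΩ⟩⟩
        refine le_ciInf fun x' => ?_
        have := hub x'.1 x'.2
        linarith
    have hm₀mem : m₀ ∈ cSuperdiffOn Ω₀ Ω₁ c φ x := by
      refine ⟨hm₀Ω, ?_⟩
      rw [htm₀]; linarith [heqx]
    -- uniqueness
    refine hxbad ⟨m₀, ?_⟩
    rw [Set.eq_singleton_iff_unique_mem]
    refine ⟨hm₀mem, fun m hm => ?_⟩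
    have h1 := hkey x hxint hgd m hm
    have h2 := hkey x hxint hgd m₀ hm₀mem
    have hgrad : gradient (fun x' => c x' m) x = gradient (fun x' => c x' m₀) x := by
      simp only [gradient]
      rw [h1, h2]
    exact hinj x hxΩ hm.1 hm₀Ω hgrad
  refine measure_mono_null hsub ?_
  exact measure_union_null hbd hdiffae
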